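/- Let F : U → ℝ^S be the smooth (polynomial) map sending the free parameters ξ = (η_1,…,η_{C−1}, (θ_{jrc})_{j=1,…,J; r=1,…,M_j−1; c=0,…,C−1}) of a latent class model to the vector of all response-pattern probabilities (P(r | η, θ))_{r}, where U is the open domain on which all η_c (including η_0 = 1 − Σ_{c≥1} η_c) and all θ_{jrc} (including θ_{j0c} = 1 − Σ_{r≥1} θ_{jrc}) are strictly positive, and let d = (C−1) + C·Σ_{j=1}^J (M_j − 1) be the number of free parameters. Let ξ⁰ ∈ U and suppose the derivative of F has constant rank on some neighborhood of ξ⁰ (ξ⁰ is a regular point). Then F is injective on some neighborhood of ξ⁰ (local identifiability) if and only if the Jacobian matrix of F at ξ⁰ has full column rank d. -/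

import Mathlib

/-- The map sending the free parameters
`ξ = (η_1,…,η_{C-1}, (θ_{jrc})_{r ≥ 1})` of a latent class model to the vector
of all response-pattern probabilities. Classes are `Fin (C+2)` (so `C ≥ 2`),
item `j` has `M j + 2` response levels; `η_0` and `θ_{j0c}` are recovered as
one minus the sum of the free coordinates via `Fin.cons`. -/
noncomputable def Fmap {J C : ℕ} (M : Fin J → ℕ)
    (ξ : (Fin (C + 1) → ℝ) × ((j : Fin J) → Fin (M j + 1) → Fin (C + 2) → ℝ))
    (r : (j : Fin J) → Fin (M j + 2)) : ℝ :=
  ∑ c : Fin (C + 2),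
    (Fin.cons (1 - ∑ c', ξ.1 c') ξ.1 : Fin (C + 2) → ℝ) c *
      ∏ j, (Fin.cons (fun c'' => 1 - ∑ s, ξ.2 j s c'') (ξ.2 j) :
        Fin (M j + 2) → Fin (C + 2) → ℝ) (r j) c

/-- The rank of the Jacobian (Fréchet derivative) of `Fmap` at `ξ`. -/
noncomputable def jacRank {J C : ℕ} (M : Fin J → ℕ)
    (ξ : (Fin (C + 1) → ℝ) × ((j : Fin J) → Fin (M j + 1) → Fin (C + 2) → ℝ)) : ℕ :=
  Module.finrank ℝ (LinearMap.range (fderiv ℝ (Fmap M) ξ).toLinearMap)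


section Aux

open Module Set Filter Topology


variable {E F : Type*} [NormedAddCommGroup E] [NormedSpace ℝ E] [FiniteDimensional ℝ E]
  [NormedAddCommGroup F] [NormedSpace ℝ F] [FiniteDimensional ℝ F]

private theorem continuous_prodQ {E F G H : Type*} [NormedAddCommGroup E] [NormedSpace ℝ E]
    [FiniteDimensional ℝ E] [NormedAddCommGroup F] [NormedSpace ℝ F] [FiniteDimensional ℝ F]
    [NormedAddCommGroup G] [NormedSpace ℝ G] [FiniteDimensional ℝ G]
    [NormedAddCommGroup H] [NormedSpace ℝ H] [FiniteDimensional ℝ H]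
    (Q : F →L[ℝ] G) (π : E →L[ℝ] H) :
    Continuous fun A : E →L[ℝ] F => (Q.comp A).prod π := by
  have h2 : (fun A : E →L[ℝ] F => (Q.comp A).prod π) =
      fun A => (ContinuousLinearMap.compL ℝ E F (G × H)
          ((ContinuousLinearMap.inl ℝ G H).comp Q)) A + (0 : E →L[ℝ] G).prod π := by
    funext A
    refine ContinuousLinearMap.ext fun w => Prod.ext ?_ ?_ <;>
      simp [ContinuousLinearMap.compL_apply, ContinuousLinearMap.add_apply,
        ContinuousLinearMap.prod_apply, ContinuousLinearMap.comp_apply,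
        ContinuousLinearMap.inl_apply, Prod.fst_add, Prod.snd_add]
  rw [h2]
  exact ((ContinuousLinearMap.compL ℝ E F (G × H)
    ((ContinuousLinearMap.inl ℝ G H).comp Q)).continuous).add continuous_const

set_option maxHeartbeats 1000000 in
theorem key_local_inj_iff {f : E → F} (hf : ContDiff ℝ 1 f) (x0 : E)
    (hreg : ∃ V ∈ 𝓝 x0, ∀ x ∈ V, finrank ℝ (LinearMap.range (fderiv ℝ f x).toLinearMap) =
      finrank ℝ (LinearMap.range (fderiv ℝ f x0).toLinearMap)) :
    (∃ W ∈ 𝓝 x0, Set.InjOn f W) ↔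
      finrank ℝ (LinearMap.range (fderiv ℝ f x0).toLinearMap) = finrank ℝ E := by
  classical
  set L : E →L[ℝ] F := fderiv ℝ f x0 with hL
  set k : ℕ := finrank ℝ (LinearMap.range L.toLinearMap) with hk
  obtain ⟨R', hR'⟩ := Submodule.exists_isCompl (LinearMap.range L.toLinearMap)
  set Q : F →L[ℝ] ↥(LinearMap.range L.toLinearMap) :=
    LinearMap.toContinuousLinearMap ((LinearMap.range L.toLinearMap).linearProjOfIsCompl R' hR') with hQdef
  have hQapp : ∀ (y : F) (hy : y ∈ LinearMap.range L.toLinearMap), Q y = ⟨y, hy⟩ := fun y hy => by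
    exact Submodule.linearProjOfIsCompl_apply_left hR' ⟨y, hy⟩
  have hdf : Differentiable ℝ f := hf.differentiable one_ne_zero
  have hstr : HasStrictFDerivAt f L x0 := hf.contDiffAt.hasStrictFDerivAt one_ne_zero
  have hrn : finrank ℝ ↥(LinearMap.range L.toLinearMap) + finrank ℝ ↥(LinearMap.ker L.toLinearMap) = finrank ℝ E :=
    LinearMap.finrank_range_add_finrank_ker (L : E →ₗ[ℝ] F)
  constructor
  · -- local injectivity → full rank
    rintro ⟨W, hW, hinj⟩
    by_contra hne
    have hkle : k ≤ finrank ℝ E := LinearMap.finrank_range_le (L : E →ₗ[ℝ] F)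
    have hklt : k < finrank ℝ E := lt_of_le_of_ne hkle hne
    -- setup kernel projection
    set K := LinearMap.ker L.toLinearMap with hKdef
    obtain ⟨q, hq⟩ := Submodule.exists_isCompl K
    set π2 : E →L[ℝ] ↥K := LinearMap.toContinuousLinearMap (K.linearProjOfIsCompl q hq) with hπ2
    set Dφ : E → (E →L[ℝ] ↥(LinearMap.range L.toLinearMap) × ↥K) :=
      fun x => ((Q.comp (fderiv ℝ f x)).prod π2) with hDφ
    set φ : E → ↥(LinearMap.range L.toLinearMap) × ↥K := fun x => (Q (f x), π2 x) with hφdef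
    have hφd : ∀ x, HasFDerivAt φ (Dφ x) x := fun x =>
      HasFDerivAt.prodMk ((Q.hasFDerivAt).comp x (hdf x).hasFDerivAt) (π2.hasFDerivAt)
    have hφstr : HasStrictFDerivAt φ (Dφ x0) x0 :=
      HasStrictFDerivAt.prodMk ((Q.hasStrictFDerivAt).comp x0 hstr) (π2.hasStrictFDerivAt)
    have hdimK : finrank ℝ ↥K + k = finrank ℝ E := by omega
    have hdimprod : finrank ℝ (↥(LinearMap.range L.toLinearMap) × ↥K) = finrank ℝ E := by
      rw [Module.finrank_prod]; omega
    -- injectivity of Dφ x0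
    have hDφ0inj : Function.Injective (Dφ x0) := by
      intro w w' hww'
      have h0 : Dφ x0 (w - w') = 0 := by rw [map_sub, hww', sub_self]
      have h1 : Q (L (w - w')) = 0 := congrArg Prod.fst h0
      have h2 : π2 (w - w') = 0 := congrArg Prod.snd h0
      have hmem : L (w - w') ∈ LinearMap.range L.toLinearMap := LinearMap.mem_range_self _ _
      have h3 : (⟨L (w - w'), hmem⟩ : ↥(LinearMap.range L.toLinearMap)) = 0 := by
        rw [← hQapp _ hmem]; exact h1
      have hLzero : L (w - w') = 0 := congrArg Subtype.val h3
      have hwK : w - w' ∈ K := LinearMap.mem_ker.mpr hLzero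
      have hwq : w - w' ∈ q := by
        have : (K.linearProjOfIsCompl q hq) (w - w') = 0 := by
          simpa [π2] using h2
        exact (Submodule.linearProjOfIsCompl_apply_eq_zero_iff hq).mp this
      have : w - w' ∈ K ⊓ q := Submodule.mem_inf.mpr ⟨hwK, hwq⟩
      rw [hq.inf_eq_bot] at this
      exact sub_eq_zero.mp ((Submodule.mem_bot ℝ).mp this)
    -- continuous linear equivalence at x0
    obtain ⟨V, hV, hVrank⟩ := hreg
    set e0 : E ≃L[ℝ] ↥(LinearMap.range L.toLinearMap) × ↥K :=
      (LinearMap.linearEquivOfInjective ((Dφ x0 : E →ₗ[ℝ] _)) hDφ0inj hdimprod.symm).toContinuousLinearEquiv with he0def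
    have he0 : (e0 : E →L[ℝ] ↥(LinearMap.range L.toLinearMap) × ↥K) = Dφ x0 := by
      refine ContinuousLinearMap.ext fun w => ?_
      exact LinearMap.linearEquivOfInjective_apply hDφ0inj hdimprod.symm w
    have hφstr' : HasStrictFDerivAt φ (e0 : E →L[ℝ] _) x0 := by rw [he0]; exact hφstr
    set Φ := HasStrictFDerivAt.toOpenPartialHomeomorph φ hφstr' with hΦdef
    have hΦcoe : (Φ : E → ↥(LinearMap.range L.toLinearMap) × ↥K) = φ := HasStrictFDerivAt.toOpenPartialHomeomorph_coe hφstr'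
    have hx0src : x0 ∈ Φ.source := HasStrictFDerivAt.mem_toOpenPartialHomeomorph_source hφstr'
    have hy0tgt : φ x0 ∈ Φ.target := by
      have := Φ.map_source hx0src
      rwa [hΦcoe] at this
    have hsymm0 : Φ.symm (φ x0) = x0 := by
      have := Φ.left_inv hx0src
      rwa [hΦcoe] at this
    -- the family u lifting a basis of the range
    set bR := Module.finBasis ℝ ↥(LinearMap.range L.toLinearMap) with hbR
    choose u hu using fun i => LinearMap.mem_range.mp (bR i).2
    have hLI0 : LinearIndependent ℝ (fun i => Q (fderiv ℝ f x0 (u i))) := by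
      have heq : (fun i => Q (fderiv ℝ f x0 (u i))) = fun i => bR i := by
        funext i
        have hmem : L (u i) ∈ LinearMap.range L.toLinearMap := LinearMap.mem_range_self _ _
        show Q (L (u i)) = bR i
        rw [hQapp _ hmem]
        exact Subtype.ext (hu i)
      rw [heq]
      exact bR.linearIndependent
    have hfdc : Continuous (fderiv ℝ f) := hf.continuous_fderiv one_ne_zero
    have hcontQ : Continuous fun x => (fun i => Q (fderiv ℝ f x (u i))) :=
      continuous_pi fun i => Q.continuous.comp
        (((ContinuousLinearMap.apply ℝ F (u i)).continuous).comp hfdc)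
    have hG1 : {x | LinearIndependent ℝ (fun i => Q (fderiv ℝ f x (u i)))} ∈ 𝓝 x0 :=
      (isOpen_setOf_linearIndependent.preimage hcontQ).mem_nhds hLI0
    -- continuity of Dφ and openness of injectivity
    have hDφcont : Continuous Dφ := (continuous_prodQ Q π2).comp hfdc
    have hG2 : {x | Function.Injective (Dφ x)} ∈ 𝓝 x0 :=
      (ContinuousLinearMap.isOpen_injective.preimage hDφcont).mem_nhds hDφ0inj
    set G : Set E := (V ∩ {x | LinearIndependent ℝ (fun i => Q (fderiv ℝ f x (u i)))}) ∩
      {x | Function.Injective (Dφ x)} with hGdef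
    have hGnhds : G ∈ 𝓝 x0 := inter_mem (inter_mem hV hG1) hG2
    -- kernel coincidence on good points
    have hker_eq : ∀ x, x ∈ V → LinearIndependent ℝ (fun i => Q (fderiv ℝ f x (u i))) →
        ∀ w : E, Q (fderiv ℝ f x w) = 0 → fderiv ℝ f x w = 0 := by
      intro x hxV hxLI w hw
      set D : E →L[ℝ] F := fderiv ℝ f x with hD
      have hrk : finrank ℝ ↥(LinearMap.range D.toLinearMap) = k := hVrank x hxV
      set T : E →ₗ[ℝ] ↥(LinearMap.range L.toLinearMap) := (Q : F →ₗ[ℝ] _).comp (D : E →ₗ[ℝ] F) with hT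
      have hTapp : ∀ w, T w = Q (D w) := fun w => rfl
      have hspan : k ≤ finrank ℝ ↥(LinearMap.range T) := by
        have h1 : Submodule.span ℝ (Set.range fun i => Q (D (u i))) ≤ LinearMap.range T := by
          rw [Submodule.span_le]
          rintro y ⟨i, rfl⟩
          exact ⟨u i, rfl⟩
        have h2 := finrank_span_eq_card hxLI
        have h3 := Submodule.finrank_mono h1
        rw [h2] at h3
        simpa using h3
      have hle : finrank ℝ ↥(LinearMap.range T) ≤ k := by
        rw [hT, LinearMap.range_comp]
        exact le_trans (Submodule.finrank_map_le _ _) (le_of_eq hrk)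
      have hrT : finrank ℝ ↥(LinearMap.range T) = k := le_antisymm hle hspan
      have hkerle : LinearMap.ker (D : E →ₗ[ℝ] F) ≤ LinearMap.ker T := by
        intro w hw
        rw [LinearMap.mem_ker] at hw ⊢
        have hw' : D w = 0 := hw
        show Q (D w) = 0
        rw [hw', map_zero]
      have h4 : finrank ℝ ↥(LinearMap.range D.toLinearMap) + finrank ℝ ↥(LinearMap.ker D.toLinearMap) = finrank ℝ E :=
        LinearMap.finrank_range_add_finrank_ker (D : E →ₗ[ℝ] F)
      have h5 := LinearMap.finrank_range_add_finrank_ker T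
      have hc1 : finrank ℝ ↥(LinearMap.ker (D : E →ₗ[ℝ] F)) = finrank ℝ ↥(LinearMap.ker D.toLinearMap) := rfl
      have hc2 : finrank ℝ ↥(LinearMap.range (D : E →ₗ[ℝ] F)) = finrank ℝ ↥(LinearMap.range D.toLinearMap) := rfl
      have hkereq : LinearMap.ker (D : E →ₗ[ℝ] F) = LinearMap.ker T :=
        Submodule.eq_of_le_of_finrank_le hkerle (by omega)
      have hwT : w ∈ LinearMap.ker T := LinearMap.mem_ker.mpr hw
      rw [← hkereq] at hwT
      exact LinearMap.mem_ker.mp hwT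
    -- neighborhood in target space
    have hB : Φ.target ∩ Φ.symm ⁻¹' (G ∩ W) ∈ 𝓝 (φ x0) := by
      refine inter_mem (Φ.open_target.mem_nhds hy0tgt) ?_
      have hcsymm : ContinuousAt Φ.symm (φ x0) := Φ.continuousAt_symm hy0tgt
      apply hcsymm.preimage_mem_nhds
      rw [hsymm0]
      exact inter_mem hGnhds hW
    -- a nonzero kernel direction
    have hKpos : 0 < finrank ℝ ↥K := by omega
    have hKnt : Nontrivial ↥K := Module.finrank_pos_iff.mp hKpos
    obtain ⟨v, hv⟩ := exists_ne (0 : ↥K)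
    set w0 : ↥(LinearMap.range L.toLinearMap) × ↥K := (0, v) with hw0def
    have hw0 : w0 ≠ 0 := by
      simp only [w0, Prod.ext_iff, ne_eq, not_and]
      intro _
      exact hv
    set c : ℝ → ↥(LinearMap.range L.toLinearMap) × ↥K := fun t => φ x0 + t • w0 with hcdef
    have hccont : Continuous c := continuous_const.add (continuous_id.smul continuous_const)
    have hc0 : c 0 = φ x0 := by simp [c]
    have hcB : c ⁻¹' (Φ.target ∩ Φ.symm ⁻¹' (G ∩ W)) ∈ 𝓝 (0 : ℝ) := by
      apply hccont.continuousAt.preimage_mem_nhds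
      rwa [hc0]
    obtain ⟨δ, hδ, hball⟩ := Metric.mem_nhds_iff.mp hcB
    set s : Set ℝ := Metric.ball (0 : ℝ) δ with hsdef
    have hmem : ∀ t ∈ s, c t ∈ Φ.target ∧ Φ.symm (c t) ∈ G ∧ Φ.symm (c t) ∈ W := by
      intro t hts
      have := hball hts
      exact ⟨this.1, this.2.1, this.2.2⟩
    -- derivative of t ↦ f (Φ.symm (c t)) vanishes on s
    have hderiv : ∀ t ∈ s, HasDerivWithinAt (fun t => f (Φ.symm (c t))) 0 s t := by
      intro t hts
      obtain ⟨hctT, hxG, _⟩ := hmem t hts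
      set x := Φ.symm (c t) with hxdef
      obtain ⟨⟨hxV, hxLI'⟩, hxinj'⟩ := hxG
      have hxLI : LinearIndependent ℝ (fun i => Q (fderiv ℝ f x (u i))) := hxLI'
      have hxinj : Function.Injective (Dφ x) := hxinj'
      set ex : E ≃L[ℝ] ↥(LinearMap.range L.toLinearMap) × ↥K :=
        (LinearMap.linearEquivOfInjective ((Dφ x : E →ₗ[ℝ] _)) hxinj
          hdimprod.symm).toContinuousLinearEquiv with hexdef
      have hex : (ex : E →L[ℝ] ↥(LinearMap.range L.toLinearMap) × ↥K) = Dφ x := by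
        refine ContinuousLinearMap.ext fun w => ?_
        exact LinearMap.linearEquivOfInjective_apply hxinj hdimprod.symm w
      have hψ : HasFDerivAt Φ.symm ((ex.symm : _ →L[ℝ] E)) (c t) := by
        refine HasFDerivAt.of_local_left_inverse (f := φ) (f' := ex) (Φ.continuousAt_symm hctT) ?_ ?_
        · rw [hex]
          exact hφd x
        · filter_upwards [Φ.open_target.mem_nhds hctT] with z hz
          have := Φ.right_inv hz
          rwa [hΦcoe] at this
      have hc' : HasDerivAt c w0 t := by
        have := (((hasDerivAt_id t).smul_const w0).const_add (φ x0))
        simp only [id, one_smul] at this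
        exact this
      have h1 : HasFDerivAt (fun y => f (Φ.symm y))
          ((fderiv ℝ f x).comp (ex.symm : _ →L[ℝ] E)) (c t) :=
        (hdf x).hasFDerivAt.comp (c t) hψ
      have h2 : HasDerivAt (fun t => f (Φ.symm (c t)))
          (((fderiv ℝ f x).comp (ex.symm : _ →L[ℝ] E)) w0) t :=
        h1.comp_hasDerivAt t hc'
      have hval : ((fderiv ℝ f x).comp (ex.symm : _ →L[ℝ] E)) w0 = 0 := by
        rw [ContinuousLinearMap.comp_apply]
        have h5 : Dφ x (ex.symm w0) = w0 := by
          rw [← hex]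
          exact ex.apply_symm_apply w0
        have h6 : Q (fderiv ℝ f x (ex.symm w0)) = 0 := by
          have := congrArg Prod.fst h5
          simpa [Dφ] using this
        exact hker_eq x hxV hxLI _ h6
      rw [hval] at h2
      exact h2.hasDerivWithinAt
    -- f is constant along the curve
    have hconv : Convex ℝ s := convex_ball _ _
    have h0s : (0 : ℝ) ∈ s := Metric.mem_ball_self hδ
    have hts : δ / 2 ∈ s := by
      simp only [s, Metric.mem_ball, Real.dist_eq, sub_zero]
      rw [abs_of_pos (by linarith)]
      linarith
    have hconst : f (Φ.symm (c (δ / 2))) = f (Φ.symm (c 0)) := by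
      have hb := hconv.norm_image_sub_le_of_norm_hasDerivWithin_le
        (C := 0) (f' := fun _ => (0 : F)) hderiv (fun x _ => by simp) h0s hts
      have h9 : ‖f (Φ.symm (c (δ / 2))) - f (Φ.symm (c 0))‖ ≤ 0 := by simpa using hb
      exact sub_eq_zero.mp (norm_le_zero_iff.mp h9)
    -- contradiction with injectivity
    have hWmem1 : Φ.symm (c (δ / 2)) ∈ W := (hmem _ hts).2.2
    have hWmem0 : Φ.symm (c 0) ∈ W := (hmem _ h0s).2.2
    have heqpt : Φ.symm (c (δ / 2)) = Φ.symm (c 0) := hinj hWmem1 hWmem0 hconst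
    have hc' : c (δ / 2) = c 0 := by
      have h7 := Φ.right_inv (hmem _ hts).1
      have h8 := Φ.right_inv (hmem _ h0s).1
      rw [← h7, ← h8, heqpt]
    have h10 : (δ / 2) • w0 = (0 : ℝ) • w0 := by
      have h11 := hc'
      simp only [c] at h11
      exact add_left_cancel h11
    have h12 : δ = 0 ∨ w0 = 0 := by simpa using h10
    rcases h12 with h | h
    · exact (ne_of_gt hδ) h
    · exact hw0 h
  · intro hrank
    have hker0 : finrank ℝ ↥(LinearMap.ker L.toLinearMap) = 0 := by omega
    have hker : LinearMap.ker L.toLinearMap = ⊥ := Submodule.finrank_eq_zero.mp hker0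
    have hLinj : Function.Injective L := LinearMap.ker_eq_bot.mp hker
    set A : E →L[ℝ] ↥(LinearMap.range L.toLinearMap) := Q.comp L with hA
    have hAinj : Function.Injective A := by
      intro a b hab
      have hma : L a ∈ LinearMap.range L.toLinearMap := LinearMap.mem_range_self _ _
      have hmb : L b ∈ LinearMap.range L.toLinearMap := LinearMap.mem_range_self _ _
      have : Q (L a) = Q (L b) := hab
      rw [hQapp _ hma, hQapp _ hmb] at this
      exact hLinj (congrArg Subtype.val this)
    have hdim : finrank ℝ E = finrank ℝ ↥(LinearMap.range L.toLinearMap) := hrank.symm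
    set eA : E ≃L[ℝ] ↥(LinearMap.range L.toLinearMap) :=
      (LinearMap.linearEquivOfInjective (A : E →ₗ[ℝ] _) hAinj hdim).toContinuousLinearEquiv
      with heAdef
    have heA : (eA : E →L[ℝ] ↥(LinearMap.range L.toLinearMap)) = A :=
      ContinuousLinearMap.ext fun w => LinearMap.linearEquivOfInjective_apply hAinj hdim w
    have hstrA : HasStrictFDerivAt (fun x => Q (f x))
        (eA : E →L[ℝ] ↥(LinearMap.range L.toLinearMap)) x0 := by
      rw [heA]
      exact (Q.hasStrictFDerivAt).comp x0 hstr
    set Φ := HasStrictFDerivAt.toOpenPartialHomeomorph (fun x => Q (f x)) hstrA with hΦdef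
    have hΦcoe : (Φ : E → ↥(LinearMap.range L.toLinearMap)) = fun x => Q (f x) :=
      HasStrictFDerivAt.toOpenPartialHomeomorph_coe hstrA
    refine ⟨Φ.source, Φ.open_source.mem_nhds (HasStrictFDerivAt.mem_toOpenPartialHomeomorph_source hstrA), ?_⟩
    intro a ha b hb hab
    refine Φ.injOn ha hb ?_
    show Φ a = Φ b
    have h1 : Φ a = Q (f a) := congrFun hΦcoe a
    have h2 : Φ b = Q (f b) := congrFun hΦcoe b
    rw [h1, h2, hab]


open Module in
theorem finrank_domain (J C : ℕ) (M : Fin J → ℕ) :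
    finrank ℝ ((Fin (C + 1) → ℝ) × ((j : Fin J) → Fin (M j + 1) → Fin (C + 2) → ℝ)) =
      (C + 1) + (C + 2) * ∑ j, (M j + 1) := by
  rw [Module.finrank_prod, Module.finrank_pi, Module.finrank_pi_fintype]
  congr 1
  · simp
  · rw [Finset.mul_sum]
    refine Finset.sum_congr rfl fun j _ => ?_
    rw [Module.finrank_pi_fintype]
    simp [Module.finrank_pi]
    ring

theorem contDiff_Fmap {J C : ℕ} (M : Fin J → ℕ) : ContDiff ℝ 1 (Fmap (C := C) M) := by
  have h1 : ∀ c' : Fin (C + 1),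
      ContDiff ℝ 1 (fun ξ : (Fin (C + 1) → ℝ) ×
        ((j : Fin J) → Fin (M j + 1) → Fin (C + 2) → ℝ) => ξ.1 c') := fun c' =>
    (ContinuousLinearMap.proj (R := ℝ) (φ := fun _ : Fin (C + 1) => ℝ)
      c').contDiff.comp contDiff_fst
  have h2 : ∀ (j : Fin J) (s : Fin (M j + 1)) (c : Fin (C + 2)),
      ContDiff ℝ 1 (fun ξ : (Fin (C + 1) → ℝ) ×
        ((j : Fin J) → Fin (M j + 1) → Fin (C + 2) → ℝ) => ξ.2 j s c) := fun j s c =>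
    (ContinuousLinearMap.proj (R := ℝ) (φ := fun _ : Fin (C + 2) => ℝ) c).contDiff.comp
      ((ContinuousLinearMap.proj (R := ℝ) (φ := fun _ : Fin (M j + 1) => Fin (C + 2) → ℝ)
          s).contDiff.comp
        ((ContinuousLinearMap.proj (R := ℝ)
            (φ := fun j : Fin J => Fin (M j + 1) → Fin (C + 2) → ℝ)
            j).contDiff.comp contDiff_snd))
  apply contDiff_pi.mpr
  intro r
  apply ContDiff.sum
  intro c _
  apply ContDiff.mul
  · rcases Fin.eq_zero_or_eq_succ c with hc | ⟨i, hc⟩ <;> subst hc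
    · simpa using contDiff_const.sub (ContDiff.sum fun c' _ => h1 c')
    · simpa using h1 i
  · apply contDiff_prod
    intro j _
    rcases Fin.eq_zero_or_eq_succ (r j) with hr | ⟨i, hr⟩ <;> rw [hr]
    · simpa using contDiff_const.sub (ContDiff.sum fun s _ => h2 j s c)
    · simpa using h2 j i c

end Aux

/-- Theorem 1 / Goodman's criterion: at a regular point `ξ0` of the
open positivity domain, `Fmap` is locally injective iff its Jacobian at `ξ0` has full
column rank `d = (C−1) + C·Σ_j (M_j − 1)`. -/
theorem stmt4 {J C : ℕ} (M : Fin J → ℕ)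
    (ξ0 : (Fin (C + 1) → ℝ) × ((j : Fin J) → Fin (M j + 1) → Fin (C + 2) → ℝ))
    -- ξ0 lies in the open domain U where all probabilities are strictly positive
    (hpos : (∀ c, 0 < ξ0.1 c) ∧ 0 < 1 - ∑ c, ξ0.1 c ∧
      (∀ j r c, 0 < ξ0.2 j r c) ∧ ∀ j c, 0 < 1 - ∑ r, ξ0.2 j r c)
    -- ξ0 is a regular point: the derivative has constant rank near ξ0
    (hreg : ∃ V ∈ nhds ξ0, ∀ ξ ∈ V, jacRank M ξ = jacRank M ξ0) :
    (∃ W ∈ nhds ξ0, Set.InjOn (Fmap M) W) ↔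
      jacRank M ξ0 = (C + 1) + (C + 2) * ∑ j, (M j + 1) := by
  have h := key_local_inj_iff (contDiff_Fmap M) ξ0 hreg
  rw [finrank_domain J C M] at h
  exact h
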